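/- Assume deg f > 1. Then the element x h y of H(f)_0 does not belong to the subalgebra ℂ[z, h] generated by h and the central element z = xy − h; in particular ℂ[z, h] is a proper subalgebra of H(f)_0. -/

import Mathlib

open Polynomial MulOpposite

noncomputable section

/-- Defining relations of the generalized Heisenberg algebra H(f):
generators x (index 0), y (index 1), h (index 2) with
h*x = x*f(h), y*h = f(h)*y, y*x = x*y + (f(h) - h). -/
inductive HeisRel (f : ℂ[X]) : FreeAlgebra ℂ (Fin 3) → FreeAlgebra ℂ (Fin 3) → Prop
  | hx : HeisRel f (FreeAlgebra.ι ℂ 2 * FreeAlgebra.ι ℂ 0)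
      (FreeAlgebra.ι ℂ 0 * aeval (FreeAlgebra.ι ℂ 2) f)
  | yh : HeisRel f (FreeAlgebra.ι ℂ 1 * FreeAlgebra.ι ℂ 2)
      (aeval (FreeAlgebra.ι ℂ 2) f * FreeAlgebra.ι ℂ 1)
  | yx : HeisRel f (FreeAlgebra.ι ℂ 1 * FreeAlgebra.ι ℂ 0)
      (FreeAlgebra.ι ℂ 0 * FreeAlgebra.ι ℂ 1 + (aeval (FreeAlgebra.ι ℂ 2) f - FreeAlgebra.ι ℂ 2))

/-- The generalized Heisenberg algebra H(f). -/
abbrev GHA (f : ℂ[X]) := RingQuot (HeisRel f)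

def ghaX (f : ℂ[X]) : GHA f := RingQuot.mkAlgHom ℂ (HeisRel f) (FreeAlgebra.ι ℂ 0)
def ghaY (f : ℂ[X]) : GHA f := RingQuot.mkAlgHom ℂ (HeisRel f) (FreeAlgebra.ι ℂ 1)
def ghaH (f : ℂ[X]) : GHA f := RingQuot.mkAlgHom ℂ (HeisRel f) (FreeAlgebra.ι ℂ 2)

/-- k-th compositional power of σ applied to h, as a polynomial: σ^k(h). -/
def sigmaIter (f : ℂ[X]) : ℕ → ℂ[X]
  | 0 => X
  | k + 1 => (sigmaIter f k).comp f

namespace GHAProof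
open Finsupp

variable (f : ℂ[X])

lemma comp_sigmaIter (k : ℕ) : f.comp (sigmaIter f k) = sigmaIter f (k + 1) := by
  induction k with
  | zero => simp [sigmaIter]
  | succ k ih =>
    show f.comp ((sigmaIter f k).comp f) = (sigmaIter f (k+1)).comp f
    rw [← Polynomial.comp_assoc, ih]

lemma natDegree_sigmaIter (k : ℕ) : (sigmaIter f k).natDegree = f.natDegree ^ k := by
  induction k with
  | zero => simp [sigmaIter]
  | succ k ih => rw [sigmaIter, Polynomial.natDegree_comp, ih, pow_succ]

/-- The lowest-weight style module: `ℕ →₀ ℂ[X]`. -/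
abbrev V := ℕ →₀ ℂ[X]

def opX : V →ₗ[ℂ] V := Finsupp.lsum ℂ fun n => Finsupp.lsingle (n + 1)

def opH : V →ₗ[ℂ] V :=
  Finsupp.lsum ℂ fun n => (Finsupp.lsingle n).comp (LinearMap.mulLeft ℂ (sigmaIter f n))

def opY : V →ₗ[ℂ] V :=
  Finsupp.lsum ℂ fun n =>
    match n with
    | 0 => 0
    | n + 1 => (Finsupp.lsingle n).comp (LinearMap.mulLeft ℂ (sigmaIter f (n+1) - X))

@[simp] lemma opX_single (n : ℕ) (g : ℂ[X]) :
    opX (Finsupp.single n g) = Finsupp.single (n+1) g := by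
  simp [opX]

@[simp] lemma opH_single (n : ℕ) (g : ℂ[X]) :
    opH f (Finsupp.single n g) = Finsupp.single n (sigmaIter f n * g) := by
  simp [opH]

@[simp] lemma opY_single_zero (g : ℂ[X]) : opY f (Finsupp.single 0 g) = 0 := by
  simp [opY]

@[simp] lemma opY_single_succ (n : ℕ) (g : ℂ[X]) :
    opY f (Finsupp.single (n+1) g) = Finsupp.single n ((sigmaIter f (n+1) - X) * g) := by
  simp [opY]

lemma opH_pow_single (k n : ℕ) (g : ℂ[X]) :
    (opH f ^ k) (Finsupp.single n g) = Finsupp.single n ((sigmaIter f n) ^ k * g) := by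
  induction k with
  | zero => simp
  | succ k ih =>
    rw [pow_succ', Module.End.mul_apply, ih, opH_single, ← mul_assoc, ← pow_succ']

lemma aeval_opH_single (q : ℂ[X]) (n : ℕ) (g : ℂ[X]) :
    (aeval (opH f) q) (Finsupp.single n g) =
      Finsupp.single n (q.comp (sigmaIter f n) * g) := by
  induction q using Polynomial.induction_on' with
  | add p q hp hq =>
    rw [map_add, LinearMap.add_apply, hp, hq, add_comp, add_mul, Finsupp.single_add]
  | monomial m c =>
    rw [aeval_monomial, Module.End.mul_apply, opH_pow_single, ← C_mul_X_pow_eq_monomial]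
    rw [mul_comp, C_comp, X_pow_comp, Module.algebraMap_end_apply, Finsupp.smul_single,
      Polynomial.smul_eq_C_mul, mul_assoc]


lemma rel_hx : opH f * opX = opX * aeval (opH f) f := by
  apply Finsupp.lhom_ext
  intro n g
  rw [Module.End.mul_apply, Module.End.mul_apply, opX_single, opH_single, aeval_opH_single,
    opX_single, comp_sigmaIter]

lemma rel_yh : opY f * opH f = aeval (opH f) f * opY f := by
  apply Finsupp.lhom_ext
  intro n g
  cases n with
  | zero =>
    rw [Module.End.mul_apply, Module.End.mul_apply, opH_single, opY_single_zero,
      opY_single_zero, map_zero]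
  | succ n =>
    rw [Module.End.mul_apply, Module.End.mul_apply, opH_single, opY_single_succ,
      opY_single_succ, aeval_opH_single, comp_sigmaIter]
    ring_nf

lemma rel_yx : opY f * opX = opX * opY f + (aeval (opH f) f - opH f) := by
  apply Finsupp.lhom_ext
  intro n g
  rw [LinearMap.add_apply, Module.End.mul_apply, Module.End.mul_apply, LinearMap.sub_apply,
    opX_single, aeval_opH_single, opH_single]
  cases n with
  | zero =>
    rw [opY_single_succ, opY_single_zero, map_zero, comp_sigmaIter]
    have : (sigmaIter f 0 : ℂ[X]) = X := rfl
    rw [this, ← Finsupp.single_sub, ← sub_mul]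
    exact (zero_add _).symm
  | succ n =>
    rw [opY_single_succ, opY_single_succ, opX_single, ← Finsupp.single_sub,
      ← Finsupp.single_add, ← sub_mul, ← add_mul, comp_sigmaIter]
    ring_nf

def rep : GHA f →ₐ[ℂ] Module.End ℂ V :=
  RingQuot.liftAlgHom ℂ
    ⟨FreeAlgebra.lift ℂ ![opX, opY f, opH f], by
      rintro a b ⟨⟩ <;>
        simp only [map_mul, map_add, map_sub, FreeAlgebra.lift_ι_apply,
          ← Polynomial.aeval_algHom_apply] <;>
        [exact rel_hx f; exact rel_yh f; exact rel_yx f]⟩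

@[simp] lemma rep_x : rep f (ghaX f) = opX := by
  rw [ghaX, rep, RingQuot.liftAlgHom_mkAlgHom_apply, FreeAlgebra.lift_ι_apply]
  rfl

@[simp] lemma rep_y : rep f (ghaY f) = opY f := by
  rw [ghaY, rep, RingQuot.liftAlgHom_mkAlgHom_apply, FreeAlgebra.lift_ι_apply]
  rfl

@[simp] lemma rep_h : rep f (ghaH f) = opH f := by
  rw [ghaH, rep, RingQuot.liftAlgHom_mkAlgHom_apply, FreeAlgebra.lift_ι_apply]
  rfl


section Relations

lemma gha_hx : ghaH f * ghaX f = ghaX f * aeval (ghaH f) f := by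
  rw [ghaH, ghaX, ← map_mul, RingQuot.mkAlgHom_rel ℂ (HeisRel.hx (f := f)), map_mul,
    ← Polynomial.aeval_algHom_apply]

lemma gha_yh : ghaY f * ghaH f = aeval (ghaH f) f * ghaY f := by
  rw [ghaY, ghaH, ← map_mul, RingQuot.mkAlgHom_rel ℂ (HeisRel.yh (f := f)), map_mul,
    ← Polynomial.aeval_algHom_apply]

lemma gha_yx : ghaY f * ghaX f = ghaX f * ghaY f + (aeval (ghaH f) f - ghaH f) := by
  rw [ghaY, ghaX, ← map_mul, RingQuot.mkAlgHom_rel ℂ (HeisRel.yx (f := f)), map_add,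
    map_mul, map_sub, ← Polynomial.aeval_algHom_apply]
  rfl

lemma gha_hpow_x (m : ℕ) : (ghaH f) ^ m * ghaX f = ghaX f * (aeval (ghaH f) f) ^ m := by
  induction m with
  | zero => simp
  | succ m ih => rw [pow_succ', mul_assoc, ih, ← mul_assoc, gha_hx, mul_assoc, ← pow_succ']

lemma gha_aeval_x (q : ℂ[X]) :
    aeval (ghaH f) q * ghaX f = ghaX f * aeval (ghaH f) (q.comp f) := by
  induction q using Polynomial.induction_on' with
  | add p q hp hq => rw [map_add, add_mul, hp, hq, add_comp, map_add, mul_add]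
  | monomial m c =>
    rw [← C_mul_X_pow_eq_monomial, mul_comp, C_comp, X_pow_comp, map_mul, map_mul, aeval_C,
      ← Algebra.smul_def, ← Algebra.smul_def, smul_mul_assoc, mul_smul_comm,
      map_pow, map_pow, aeval_X, gha_hpow_x]

lemma gha_y_aeval (q : ℂ[X]) :
    ghaY f * aeval (ghaH f) q = aeval (ghaH f) (q.comp f) * ghaY f := by
  induction q using Polynomial.induction_on' with
  | add p q hp hq => rw [map_add, mul_add, hp, hq, add_comp, map_add, add_mul]
  | monomial m c =>
    have hm : ∀ m : ℕ, ghaY f * (ghaH f) ^ m = (aeval (ghaH f) f) ^ m * ghaY f := by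
      intro m
      induction m with
      | zero => simp
      | succ m ihm =>
        rw [pow_succ, ← mul_assoc, ihm, mul_assoc, gha_yh, ← mul_assoc, ← pow_succ]
    rw [← C_mul_X_pow_eq_monomial, mul_comp, C_comp, X_pow_comp, map_mul, map_mul, aeval_C,
      ← Algebra.smul_def, ← Algebra.smul_def, mul_smul_comm, smul_mul_assoc,
      map_pow, map_pow, aeval_X, hm]

lemma gha_ypow_aeval (k : ℕ) (q : ℂ[X]) :
    ∃ G : ℂ[X], (ghaY f) ^ k * aeval (ghaH f) q = aeval (ghaH f) G * (ghaY f) ^ k := by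
  induction k generalizing q with
  | zero => exact ⟨q, by simp⟩
  | succ k ih =>
    obtain ⟨G, hG⟩ := ih (q.comp f)
    exact ⟨G, by rw [pow_succ, mul_assoc, gha_y_aeval, ← mul_assoc, hG, mul_assoc,
      ← pow_succ]⟩

lemma gha_ypow_x (k : ℕ) :
    ∃ G : ℂ[X], (ghaY f) ^ (k + 1) * ghaX f
      = ghaX f * (ghaY f) ^ (k + 1) + aeval (ghaH f) G * (ghaY f) ^ k := by
  induction k with
  | zero => exact ⟨f - X, by simpa using gha_yx f⟩
  | succ k ih =>
    obtain ⟨G, hG⟩ := ih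
    refine ⟨f - X + G.comp f, ?_⟩
    rw [pow_succ' _ (k+1), mul_assoc, hG, mul_add, ← mul_assoc, gha_yx, add_mul,
      mul_assoc, ← pow_succ', ← mul_assoc, gha_y_aeval, mul_assoc, ← pow_succ',
      map_add, map_sub, add_mul, aeval_X]
    rw [add_assoc]

end Relations

section Span

/-- The spanning set of H(f)_0. -/
def S : Set (GHA f) := {a | ∃ k m : ℕ, a = (ghaX f) ^ k * (ghaH f) ^ m * (ghaY f) ^ k}

/-- H(f)_0 as a submodule. -/
def M : Submodule ℂ (GHA f) := Submodule.span ℂ (S f)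

lemma xqy_mem (k : ℕ) (q : ℂ[X]) :
    (ghaX f) ^ k * aeval (ghaH f) q * (ghaY f) ^ k ∈ M f := by
  induction q using Polynomial.induction_on' with
  | add p q hp hq =>
    rw [map_add, mul_add, add_mul]
    exact (M f).add_mem hp hq
  | monomial m c =>
    rw [← C_mul_X_pow_eq_monomial, map_mul, aeval_C, map_pow, aeval_X, ← Algebra.smul_def,
      mul_smul_comm, smul_mul_assoc]
    exact (M f).smul_mem c (Submodule.subset_span ⟨k, m, rfl⟩)

lemma one_mem_M : (1 : GHA f) ∈ M f :=
  Submodule.subset_span ⟨0, 0, by simp⟩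

lemma mul_h_mem (v : GHA f) (hv : v ∈ M f) : v * ghaH f ∈ M f := by
  induction hv using Submodule.span_induction with
  | zero => simp
  | add a b _ _ ha hb => rw [add_mul]; exact (M f).add_mem ha hb
  | smul c a _ ha => rw [smul_mul_assoc]; exact (M f).smul_mem c ha
  | mem a hmem => ?_
  obtain ⟨k, m, rfl⟩ := hmem
  obtain ⟨G, hG⟩ := gha_ypow_aeval f k X
  rw [aeval_X] at hG
  have h1 : (ghaY f) ^ k * ghaH f = aeval (ghaH f) G * (ghaY f) ^ k := hG
  have e : ghaX f ^ k * ghaH f ^ m * ghaY f ^ k * ghaH f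
      = ghaX f ^ k * aeval (ghaH f) (X ^ m * G) * ghaY f ^ k :=
    calc ghaX f ^ k * ghaH f ^ m * ghaY f ^ k * ghaH f
        = ghaX f ^ k * ghaH f ^ m * ((ghaY f) ^ k * ghaH f) := by noncomm_ring
      _ = ghaX f ^ k * ghaH f ^ m * (aeval (ghaH f) G * (ghaY f) ^ k) := by rw [h1]
      _ = ghaX f ^ k * (ghaH f ^ m * aeval (ghaH f) G) * ghaY f ^ k := by noncomm_ring
      _ = ghaX f ^ k * aeval (ghaH f) (X ^ m * G) * ghaY f ^ k := by
          rw [map_mul, map_pow, aeval_X]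
  rw [e]
  exact xqy_mem f k _

lemma mul_z_mem (v : GHA f) (hv : v ∈ M f) :
    v * (ghaX f * ghaY f - ghaH f) ∈ M f := by
  induction hv using Submodule.span_induction with
  | zero => simp
  | add a b _ _ ha hb => rw [add_mul]; exact (M f).add_mem ha hb
  | smul c a _ ha => rw [smul_mul_assoc]; exact (M f).smul_mem c ha
  | mem a hmem => ?_
  obtain ⟨k, m, rfl⟩ := hmem
  rw [mul_sub]
  refine (M f).sub_mem ?_ (mul_h_mem f _ (Submodule.subset_span ⟨k, m, rfl⟩))
  cases k with
  | zero =>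
    have e : ghaX f ^ 0 * ghaH f ^ m * ghaY f ^ 0 * (ghaX f * ghaY f)
        = ghaX f ^ 1 * aeval (ghaH f) (((X : ℂ[X]) ^ m).comp f) * ghaY f ^ 1 :=
      calc ghaX f ^ 0 * ghaH f ^ m * ghaY f ^ 0 * (ghaX f * ghaY f)
          = (aeval (ghaH f) ((X : ℂ[X]) ^ m) * ghaX f) * ghaY f := by
            rw [map_pow, aeval_X]; noncomm_ring
        _ = (ghaX f * aeval (ghaH f) (((X : ℂ[X]) ^ m).comp f)) * ghaY f := by
            rw [gha_aeval_x]
        _ = ghaX f ^ 1 * aeval (ghaH f) (((X : ℂ[X]) ^ m).comp f) * ghaY f ^ 1 := by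
            rw [pow_one, pow_one]
    rw [e]
    exact xqy_mem f 1 _
  | succ k =>
    obtain ⟨G, hG⟩ := gha_ypow_x f k
    have e : ghaX f ^ (k+1) * ghaH f ^ m * ghaY f ^ (k+1) * (ghaX f * ghaY f)
        = ghaX f ^ (k+2) * aeval (ghaH f) (((X : ℂ[X]) ^ m).comp f) * ghaY f ^ (k+2)
          + ghaX f ^ (k+1) * aeval (ghaH f) ((X : ℂ[X]) ^ m * G) * ghaY f ^ (k+1) :=
      calc ghaX f ^ (k+1) * ghaH f ^ m * ghaY f ^ (k+1) * (ghaX f * ghaY f)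
          = ghaX f ^ (k+1) * ghaH f ^ m * (ghaY f ^ (k+1) * ghaX f) * ghaY f := by
            noncomm_ring
        _ = ghaX f ^ (k+1) * ghaH f ^ m
              * (ghaX f * ghaY f ^ (k+1) + aeval (ghaH f) G * ghaY f ^ k) * ghaY f := by
            rw [hG]
        _ = ghaX f ^ (k+1) * ((aeval (ghaH f) ((X : ℂ[X]) ^ m) * ghaX f) * ghaY f ^ (k+2))
              + ghaX f ^ (k+1) * (aeval (ghaH f) ((X : ℂ[X]) ^ m) * aeval (ghaH f) G)
                * ghaY f ^ (k+1) := by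
            rw [map_pow, aeval_X]; noncomm_ring
        _ = ghaX f ^ (k+1) * ((ghaX f * aeval (ghaH f) (((X : ℂ[X]) ^ m).comp f)) * ghaY f ^ (k+2))
              + ghaX f ^ (k+1) * aeval (ghaH f) ((X : ℂ[X]) ^ m * G) * ghaY f ^ (k+1) := by
            rw [gha_aeval_x, map_mul]
        _ = ghaX f ^ (k+2) * aeval (ghaH f) (((X : ℂ[X]) ^ m).comp f) * ghaY f ^ (k+2)
              + ghaX f ^ (k+1) * aeval (ghaH f) ((X : ℂ[X]) ^ m * G) * ghaY f ^ (k+1) := by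
            noncomm_ring
    rw [e]
    exact (M f).add_mem (xqy_mem f (k+2) _) (xqy_mem f (k+1) _)

lemma adjoin_subset_M :
    (Algebra.adjoin ℂ ({ghaX f * ghaY f - ghaH f, ghaH f} : Set (GHA f)) : Set (GHA f))
      ⊆ (M f : Set (GHA f)) := by
  intro p hp
  have h1 : p ∈ Subalgebra.toSubmodule
      (Algebra.adjoin ℂ ({ghaX f * ghaY f - ghaH f, ghaH f} : Set (GHA f))) := hp
  rw [Algebra.adjoin_eq_span] at h1
  have key : ∀ w ∈ Submonoid.closure ({ghaX f * ghaY f - ghaH f, ghaH f} : Set (GHA f)),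
      ∀ v ∈ M f, v * w ∈ M f := by
    intro w hw
    induction hw using Submonoid.closure_induction with
    | mem w hw =>
      rcases hw with rfl | rfl
      · exact fun v hv => mul_z_mem f v hv
      · exact fun v hv => mul_h_mem f v hv
    | one => exact fun v hv => by rwa [mul_one]
    | mul a b ha hb iha ihb => exact fun v hv => by rw [← mul_assoc]; exact ihb _ (iha v hv)
  refine Submodule.span_le.mpr ?_ h1
  intro w hw
  have := key w hw 1 (one_mem_M f)
  rwa [one_mul] at this

end Span

section Symbol

/-- Level-`n` symbol: substitute `(z,h) ↦ (-X, σ_n)`. -/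
def symb (n : ℕ) : Polynomial ℂ[X] →+* ℂ[X] :=
  eval₂RingHom (aeval (-X : ℂ[X])).toRingHom (sigmaIter f n)

lemma symb_X (n : ℕ) : symb f n X = sigmaIter f n := by simp [symb]

lemma symb_C (n : ℕ) (q : ℂ[X]) : symb f n (C q) = q.comp (-X) := by
  simp only [symb, coe_eval₂RingHom, eval₂_C, AlgHom.toRingHom_eq_coe, AlgHom.coe_toRingHom]
  rw [aeval_def, Polynomial.comp, Polynomial.algebraMap_eq]

lemma rep_z_single (n : ℕ) (g : ℂ[X]) :
    rep f (ghaX f * ghaY f - ghaH f) (Finsupp.single n g)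
      = Finsupp.single n (-X * g) := by
  rw [map_sub, map_mul, rep_x, rep_y, rep_h, LinearMap.sub_apply, Module.End.mul_apply]
  cases n with
  | zero =>
    rw [opY_single_zero, map_zero, opH_single, zero_sub, ← Finsupp.single_neg]
    have : (sigmaIter f 0 : ℂ[X]) = X := rfl
    rw [this, neg_mul]
  | succ n =>
    rw [opY_single_succ, opX_single, opH_single, ← Finsupp.single_sub, ← sub_mul]
    congr 1
    ring

lemma exists_symbol {p : GHA f}
    (hp : p ∈ Algebra.adjoin ℂ ({ghaX f * ghaY f - ghaH f, ghaH f} : Set (GHA f))) :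
    ∃ P : Polynomial ℂ[X], ∀ n g,
      rep f p (Finsupp.single n g) = Finsupp.single n (symb f n P * g) := by
  induction hp using Algebra.adjoin_induction with
  | mem a ha =>
    rcases ha with rfl | rfl
    · refine ⟨C X, fun n g => ?_⟩
      rw [rep_z_single, symb_C, X_comp]
    · refine ⟨X, fun n g => ?_⟩
      rw [rep_h, opH_single, symb_X]
  | algebraMap r =>
    refine ⟨C (C r), fun n g => ?_⟩
    rw [AlgHom.commutes, symb_C, C_comp, Module.algebraMap_end_apply, Finsupp.smul_single,
      Polynomial.smul_eq_C_mul]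
  | add p q hp hq ihp ihq =>
    obtain ⟨P, hP⟩ := ihp
    obtain ⟨Q, hQ⟩ := ihq
    refine ⟨P + Q, fun n g => ?_⟩
    rw [map_add, LinearMap.add_apply, hP, hQ, map_add, add_mul, Finsupp.single_add]
  | mul p q hp hq ihp ihq =>
    obtain ⟨P, hP⟩ := ihp
    obtain ⟨Q, hQ⟩ := ihq
    refine ⟨P * Q, fun n g => ?_⟩
    rw [map_mul, Module.End.mul_apply, hQ, hP, map_mul, mul_assoc]

lemma rep_xhy_single_zero :
    rep f (ghaX f * ghaH f * ghaY f) (Finsupp.single 0 1) = 0 := by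
  rw [map_mul, map_mul, rep_x, rep_y, rep_h, Module.End.mul_apply, Module.End.mul_apply,
    opY_single_zero, map_zero, map_zero]

lemma rep_xhy_single_succ (n : ℕ) :
    rep f (ghaX f * ghaH f * ghaY f) (Finsupp.single (n+1) 1)
      = Finsupp.single (n+1) (sigmaIter f n * (sigmaIter f (n+1) - X)) := by
  rw [map_mul, map_mul, rep_x, rep_y, rep_h, Module.End.mul_apply, Module.End.mul_apply,
    opY_single_succ, opH_single, opX_single, mul_one]

end Symbol

section Degree

lemma natDegree_eval_le (p : Polynomial ℂ[X]) (s : ℂ[X]) (b k : ℕ)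
    (hb : ∀ j, (p.coeff j).natDegree ≤ b) (hk : p.natDegree ≤ k) :
    (p.eval s).natDegree ≤ b + k * s.natDegree := by
  rw [eval_eq_sum_range]
  refine natDegree_sum_le_of_forall_le _ _ ?_
  intro i hi
  refine le_trans natDegree_mul_le (add_le_add (hb i) ?_)
  rw [natDegree_pow]
  exact Nat.mul_le_mul_right _ (by have := Finset.mem_range.mp hi; omega)

lemma no_symbol (hf : 1 < f.natDegree) (P : Polynomial ℂ[X])
    (h0 : symb f 0 P = 0)
    (hn : ∀ n : ℕ, symb f (n+1) P = sigmaIter f n * (sigmaIter f (n+1) - X)) : False := by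
  set d := f.natDegree with hd
  -- divide by v + u
  set D : Polynomial ℂ[X] := X + C (X : ℂ[X]) with hD
  have hmonic : D.Monic := monic_X_add_C _
  have hrdeg : (P %ₘ D).degree ≤ 0 := by
    have h1 : (P %ₘ D).degree < D.degree := degree_modByMonic_lt P hmonic
    rw [hD, degree_X_add_C] at h1
    exact Nat.WithBot.lt_one_iff_le_zero.mp h1
  have hr : P %ₘ D = C ((P %ₘ D).coeff 0) := eq_C_of_degree_le_zero hrdeg
  have hP : C ((P %ₘ D).coeff 0) + D * (P /ₘ D) = P := by rw [← hr]; exact modByMonic_add_div P D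
  have hsymbD : ∀ n, symb f n D = sigmaIter f n - X := by
    intro n
    rw [hD, map_add, symb_X, symb_C, X_comp, ← sub_eq_add_neg]
  have hσ0 : symb f 0 D = 0 := by
    rw [hsymbD]
    have : (sigmaIter f 0 : ℂ[X]) = X := rfl
    rw [this, sub_self]
  -- the remainder vanishes
  have hc : (P %ₘ D).coeff 0 = 0 := by
    have h1 := congrArg (symb f 0) hP
    rw [map_add, map_mul, hσ0, zero_mul, add_zero, h0, symb_C] at h1
    have h2 := congrArg (fun q => q.comp (-X : ℂ[X])) h1
    simpa [Polynomial.comp_assoc] using h2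
  have hPDQ : P = D * (P /ₘ D) := by
    have h1 := hP
    rw [hc, map_zero, zero_add] at h1
    exact h1.symm
  -- the quotient polynomial, mapped to ℂ[t][v]
  set Q' : Polynomial ℂ[X] := (P /ₘ D).map (aeval (-X : ℂ[X])).toRingHom with hQ'
  have hσdeg : ∀ k, (sigmaIter f k).natDegree = d ^ k := natDegree_sigmaIter f
  have hd2 : 2 ≤ d := hf
  have hσne : ∀ n : ℕ, sigmaIter f (n+1) - X ≠ 0 := by
    intro n h
    have h1 : sigmaIter f (n+1) = X := by rwa [sub_eq_zero] at h
    have h2 := hσdeg (n+1)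
    rw [h1, natDegree_X] at h2
    have : 2 ≤ d ^ (n+1) := le_trans hd2 (Nat.le_self_pow (by omega) d)
    omega
  -- key evaluation identity
  have hQeval : ∀ n : ℕ, Q'.eval (sigmaIter f (n+1)) = sigmaIter f n := by
    intro n
    have h1 := hn n
    rw [hPDQ, map_mul, hsymbD] at h1
    have h2 : (sigmaIter f (n+1) - X) * symb f (n+1) (P /ₘ D)
        = (sigmaIter f (n+1) - X) * sigmaIter f n := by rw [h1]; ring
    have h3 := mul_left_cancel₀ (hσne n) h2
    rw [← h3, symb, coe_eval₂RingHom, eval₂_eq_eval_map]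
  have hQ'ne : Q' ≠ 0 := by
    intro h
    have h1 := hQeval 0
    rw [h, eval_zero] at h1
    exact X_ne_zero h1.symm
  set m := Q'.natDegree with hm
  rcases Nat.eq_zero_or_pos m with hm0 | hm1
  · -- constant case
    rw [hm] at hm0
    obtain ⟨c, hcQ⟩ := natDegree_eq_zero.mp hm0
    have h1 := hQeval 0
    have h2 := hQeval 1
    rw [← hcQ, eval_C] at h1 h2
    have hσ1 : sigmaIter f 1 = f := by
      show (sigmaIter f 0).comp f = f
      show (X : ℂ[X]).comp f = f
      rw [X_comp]
    rw [hσ1] at h2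
    have h5 : (f : ℂ[X]) = X := by rw [← h2, h1]; rfl
    have h4 : f.natDegree = 1 := by rw [h5, natDegree_X]
    omega
  · -- positive degree case
    set B := (Finset.range (m+1)).sup (fun j => (Q'.coeff j).natDegree) with hB
    have hcoeff : ∀ j, (Q'.coeff j).natDegree ≤ B := by
      intro j
      rcases le_or_gt j m with hj | hj
      · exact Finset.le_sup (f := fun j => (Q'.coeff j).natDegree)
          (Finset.mem_range.mpr (by omega))
      · rw [coeff_eq_zero_of_natDegree_lt hj, natDegree_zero]; exact Nat.zero_le _
    set s : ℂ[X] := sigmaIter f (B+1) with hs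
    have hDs : s.natDegree = d ^ (B+1) := hσdeg (B+1)
    have hBDs : B < s.natDegree := by
      calc B < 2 ^ B := Nat.lt_two_pow_self
        _ ≤ 2 ^ (B+1) := Nat.pow_le_pow_right (by omega) (by omega)
        _ ≤ d ^ (B+1) := Nat.pow_le_pow_left hd2 _
        _ = s.natDegree := hDs.symm
    have hsne : s ≠ 0 := by
      intro h
      rw [h, natDegree_zero] at hDs
      have : 0 < d ^ (B+1) := Nat.pow_pos (by omega)
      omega
    have hlc : Q'.leadingCoeff ≠ 0 := leadingCoeff_ne_zero.mpr hQ'ne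
    have hsplit : Q'.eval s = Q'.eraseLead.eval s + Q'.leadingCoeff * s ^ m := by
      conv_lhs => rw [← eraseLead_add_C_mul_X_pow Q']
      rw [eval_add, eval_mul, eval_C, eval_pow, eval_X]
    have hEbound : (Q'.eraseLead.eval s).natDegree ≤ B + (m-1) * s.natDegree := by
      refine natDegree_eval_le _ _ _ _ ?_ (eraseLead_natDegree_le Q')
      intro j
      rw [eraseLead_coeff]
      split
      · rw [natDegree_zero]; exact Nat.zero_le _
      · exact hcoeff j
    have hTop : (Q'.leadingCoeff * s ^ m).natDegree
        = Q'.leadingCoeff.natDegree + m * s.natDegree := by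
      rw [natDegree_mul hlc (pow_ne_zero _ hsne), natDegree_pow]
    have hmm : m * s.natDegree = (m-1) * s.natDegree + s.natDegree := by
      have h9 : m - 1 + 1 = m := Nat.succ_pred_eq_of_pos hm1
      calc m * s.natDegree = (m - 1 + 1) * s.natDegree := by rw [h9]
        _ = (m-1) * s.natDegree + s.natDegree := Nat.succ_mul _ _
    have hlt : (Q'.eraseLead.eval s).natDegree < (Q'.leadingCoeff * s ^ m).natDegree := by
      rw [hTop]
      calc (Q'.eraseLead.eval s).natDegree ≤ B + (m-1) * s.natDegree := hEbound
        _ < s.natDegree + (m-1) * s.natDegree := Nat.add_lt_add_right hBDs _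
        _ = (m-1) * s.natDegree + s.natDegree := Nat.add_comm _ _
        _ = m * s.natDegree := hmm.symm
        _ ≤ Q'.leadingCoeff.natDegree + m * s.natDegree := Nat.le_add_left _ _
    have hdeg : (Q'.eval s).natDegree = Q'.leadingCoeff.natDegree + m * s.natDegree := by
      rw [hsplit, natDegree_add_eq_right_of_natDegree_lt hlt, hTop]
    have heq := hQeval B
    rw [← hs] at heq
    rw [heq, hσdeg B] at hdeg
    have h1 : s.natDegree ≤ m * s.natDegree := Nat.le_mul_of_pos_left _ hm1
    have h2 : d ^ B < s.natDegree := by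
      rw [hDs]
      have h3 : 0 < d ^ B := Nat.pow_pos (by omega)
      calc d ^ B < d ^ B * 2 := by omega
        _ ≤ d ^ B * d := Nat.mul_le_mul_left _ hd2
        _ = d ^ (B+1) := (pow_succ d B).symm
    omega

end Degree

end GHAProof

/-- For deg f > 1, the subalgebra ℂ[z,h] (z = xy - h central) is a proper
subalgebra of H(f)_0: it is contained in H(f)_0, but x h y ∈ H(f)_0 ∖ ℂ[z,h]. -/
theorem gha_czh_proper (f : ℂ[X]) (hf : 1 < f.natDegree) :
    (↑(Algebra.adjoin ℂ ({ghaX f * ghaY f - ghaH f, ghaH f} : Set (GHA f))) : Set (GHA f))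
        ⊆ ↑(Submodule.span ℂ
            {a : GHA f | ∃ k m : ℕ, a = (ghaX f) ^ k * (ghaH f) ^ m * (ghaY f) ^ k}) ∧
    ghaX f * ghaH f * ghaY f ∈ Submodule.span ℂ
        {a : GHA f | ∃ k m : ℕ, a = (ghaX f) ^ k * (ghaH f) ^ m * (ghaY f) ^ k} ∧
    ghaX f * ghaH f * ghaY f ∉
        Algebra.adjoin ℂ ({ghaX f * ghaY f - ghaH f, ghaH f} : Set (GHA f)) := by
  refine ⟨GHAProof.adjoin_subset_M f, ?_, ?_⟩
  · exact Submodule.subset_span ⟨1, 1, by rw [pow_one, pow_one, pow_one]⟩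
  · intro hmem
    obtain ⟨P, hP⟩ := GHAProof.exists_symbol f hmem
    have h0 : GHAProof.symb f 0 P = 0 := by
      have h1 := hP 0 1
      rw [GHAProof.rep_xhy_single_zero] at h1
      have h2 := Finsupp.single_eq_zero.mp h1.symm
      rwa [mul_one] at h2
    have hn : ∀ n : ℕ, GHAProof.symb f (n+1) P
        = sigmaIter f n * (sigmaIter f (n+1) - X) := by
      intro n
      have h1 := hP (n+1) 1
      rw [GHAProof.rep_xhy_single_succ] at h1
      have h2 := Finsupp.single_injective (n+1) h1.symm
      rw [mul_one] at h2
      exact h2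
    exact GHAProof.no_symbol f hf P h0 hn
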